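/- arXiv:0910.2557 — 2 statements merged into one kernel-verified Lean document; each statement's English description precedes it below -/
import Mathlib

section
/- Under the setup, the constant coefficient a₀ of g satisfies a₀² = 0. -/
open PowerSeries

/-- Substitution (composition) of formal power series: `pscomp f g` is `f ∘ g`,
i.e. the series `∑ₖ fₖ gᵏ`, whose `n`-th coefficient is the (finitely supported,
when the constant coefficient of `g` is nilpotent) sum `∑ᶠ k, fₖ · (coeff n gᵏ)`. -/
noncomputable def pscomp {A : Type*} [CommRing A] (f g : PowerSeries A) : PowerSeries A :=
  PowerSeries.mk fun n => ∑ᶠ k : ℕ, (coeff k f) * (coeff n (g ^ k))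

section PscompLemmas

variable {A : Type*} [CommRing A]

private lemma coeff_X_pow_mul_eq_zero {h : PowerSeries A} {n j : ℕ} (hj : n < j) :
    coeff n ((X : PowerSeries A) ^ j * h) = 0 := by
  rw [PowerSeries.coeff_mul]
  apply Finset.sum_eq_zero
  rintro ⟨i, l⟩ hmem
  rw [Finset.HasAntidiagonal.mem_antidiagonal] at hmem
  have hi : i ≤ n := by omega
  rw [coeff_X_pow, if_neg (by omega), zero_mul]

private lemma coeff_pow_eq_zero {g : PowerSeries A} {M : ℕ}
    (hM : (constantCoeff g) ^ M = 0) {n k : ℕ} (h : n + M ≤ k) :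
    coeff n (g ^ k) = 0 := by
  set c := constantCoeff g with hc
  have hX : (X : PowerSeries A) ∣ (g - C c) := by
    rw [PowerSeries.X_dvd_iff]
    simp [hc]
  obtain ⟨e, he⟩ := hX
  have hrepr : g ^ k = (C c + (g - C c)) ^ k := by ring
  rw [hrepr, add_pow, map_sum]
  apply Finset.sum_eq_zero
  intro j hj
  rw [Finset.mem_range] at hj
  rcases le_or_gt (k - j) n with hkj | hkj
  · -- then j ≥ M, so (C c)^j = 0
    have hjM : M ≤ j := by omega
    have hcj : c ^ j = 0 := by
      have : c ^ j = c ^ M * c ^ (j - M) := by rw [← pow_add]; congr 1; omega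
      rw [this, hM, zero_mul]
    have : (C c) ^ j = 0 := by rw [← map_pow, hcj, map_zero]
    rw [this, zero_mul, zero_mul, map_zero]
  · -- the positive-order part has high order
    have hterm : (C c) ^ j * (g - C c) ^ (k - j) * ((k.choose j : ℕ) : PowerSeries A)
        = (X : PowerSeries A) ^ (k - j) * ((C c) ^ j * e ^ (k - j) *
            ((k.choose j : ℕ) : PowerSeries A)) := by
      rw [he, mul_pow]; ring
    rw [hterm, coeff_X_pow_mul_eq_zero hkj]

private lemma coeff_pscomp_eq_sum {h : PowerSeries A} {M : ℕ}
    (hM : (constantCoeff h) ^ M = 0) (f : PowerSeries A) (n N : ℕ) (hN : n + M ≤ N) :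
    coeff n (pscomp f h) = ∑ k ∈ Finset.range N, coeff k f * coeff n (h ^ k) := by
  rw [pscomp, coeff_mk]
  apply finsum_eq_sum_of_support_subset
  intro k hk
  simp only [Function.mem_support] at hk
  simp only [Finset.coe_range, Set.mem_Iio]
  by_contra hkN
  push_neg at hkN
  exact hk (by rw [coeff_pow_eq_zero hM (le_trans hN hkN), mul_zero])

private lemma coeff_pscomp_eq_eval₂ {h : PowerSeries A} {M : ℕ}
    (hM : (constantCoeff h) ^ M = 0) (f : PowerSeries A) (n N : ℕ) (hN : n + M ≤ N + 1) :
    coeff n (pscomp f h) = coeff n (Polynomial.eval₂ (C) h (trunc (N + 1) f)) := by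
  rw [Polynomial.eval₂_eq_sum_range' (C) (natDegree_trunc_lt f N) h, map_sum,
    coeff_pscomp_eq_sum hM f n (N + 1) hN]
  apply Finset.sum_congr rfl
  intro i hi
  rw [Finset.mem_range] at hi
  rw [PowerSeries.coeff_C_mul, PowerSeries.coeff_trunc, if_pos hi]

private lemma pscomp_mul {h : PowerSeries A} {M : ℕ}
    (hM : (constantCoeff h) ^ M = 0) (f₁ f₂ : PowerSeries A) :
    pscomp (f₁ * f₂) h = pscomp f₁ h * pscomp f₂ h := by
  ext n
  set N := n + M with hN
  have key : ∀ p ∈ Finset.HasAntidiagonal.antidiagonal n,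
      coeff p.1 (pscomp f₁ h) * coeff p.2 (pscomp f₂ h)
        = coeff p.1 (Polynomial.eval₂ (C) h (trunc (N + 1) f₁)) *
          coeff p.2 (Polynomial.eval₂ (C) h (trunc (N + 1) f₂)) := by
    rintro ⟨i, l⟩ hmem
    rw [Finset.HasAntidiagonal.mem_antidiagonal] at hmem
    rw [coeff_pscomp_eq_eval₂ hM f₁ i N (by omega), coeff_pscomp_eq_eval₂ hM f₂ l N (by omega)]
  rw [PowerSeries.coeff_mul, Finset.sum_congr rfl key, ← PowerSeries.coeff_mul,
    ← Polynomial.eval₂_mul]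
  -- compare the two polynomials
  have hdvd : (Polynomial.X : Polynomial A) ^ (N + 1) ∣
      (trunc (N + 1) f₁ * trunc (N + 1) f₂ - trunc (N + 1 + N + 1) (f₁ * f₂)) := by
    rw [Polynomial.X_pow_dvd_iff]
    intro d hd
    rw [Polynomial.coeff_sub, Polynomial.coeff_mul, PowerSeries.coeff_trunc,
      if_pos (by omega), PowerSeries.coeff_mul]
    rw [sub_eq_zero]
    apply Finset.sum_congr rfl
    rintro ⟨i, l⟩ hmem
    rw [Finset.HasAntidiagonal.mem_antidiagonal] at hmem
    rw [PowerSeries.coeff_trunc, PowerSeries.coeff_trunc, if_pos (by omega), if_pos (by omega)]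
  obtain ⟨q, hq⟩ := hdvd
  have hsplit : trunc (N + 1) f₁ * trunc (N + 1) f₂
      = trunc (N + 1 + N + 1) (f₁ * f₂) + Polynomial.X ^ (N + 1) * q := by
    rw [← hq]; ring
  rw [hsplit, Polynomial.eval₂_add, map_add, Polynomial.eval₂_mul, Polynomial.eval₂_X_pow]
  have hzero : coeff n (h ^ (N + 1) * Polynomial.eval₂ (C) h q) = 0 := by
    rw [PowerSeries.coeff_mul]
    apply Finset.sum_eq_zero
    rintro ⟨i, l⟩ hmem
    rw [Finset.HasAntidiagonal.mem_antidiagonal] at hmem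
    rw [coeff_pow_eq_zero hM (show i + M ≤ N + 1 by omega), zero_mul]
  rw [hzero, add_zero, coeff_pscomp_eq_eval₂ hM (f₁ * f₂) n (N + 1 + N) (by omega)]

private lemma pscomp_X {h : PowerSeries A} : pscomp (X : PowerSeries A) h = h := by
  ext n
  rw [pscomp, coeff_mk]
  rw [finsum_eq_single _ 1 (fun k hk => by rw [coeff_X, if_neg hk, zero_mul])]
  rw [coeff_X, if_pos rfl, one_mul, pow_one]

private lemma coeff_zero_mul' (φ ψ : PowerSeries A) :
    coeff 0 (φ * ψ) = coeff 0 φ * coeff 0 ψ := by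
  rw [PowerSeries.coeff_mul, Finset.Nat.antidiagonal_zero, Finset.sum_singleton]

private lemma coeff_one_mul' (φ ψ : PowerSeries A) :
    coeff 1 (φ * ψ) = coeff 0 φ * coeff 1 ψ + coeff 1 φ * coeff 0 ψ := by
  rw [PowerSeries.coeff_mul, Finset.Nat.sum_antidiagonal_eq_sum_range_succ_mk,
    Finset.sum_range_succ, Finset.sum_range_one]

private lemma coeff_two_mul' (φ ψ : PowerSeries A) :
    coeff 2 (φ * ψ) = coeff 0 φ * coeff 2 ψ + coeff 1 φ * coeff 1 ψ
      + coeff 2 φ * coeff 0 ψ := by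
  rw [PowerSeries.coeff_mul, Finset.Nat.sum_antidiagonal_eq_sum_range_succ_mk,
    Finset.sum_range_succ, Finset.sum_range_succ, Finset.sum_range_one]

end PscompLemmas

theorem a0_sq_eq_zero {A : Type*} [CommRing A] [IsLocalRing A] [IsArtinianRing A]
    (h5 : (5 : A) ∈ IsLocalRing.maximalIdeal A)
    (y₁ y₂ : A)
    (hy₁ : 1 + y₁ + y₁ ^ 2 + y₁ ^ 3 + y₁ ^ 4 = 0)
    (hy₂ : 1 + y₂ + y₂ ^ 2 + y₂ ^ 3 + y₂ ^ 4 = 0)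
    (hy₁m : y₁ - 1 ∈ IsLocalRing.maximalIdeal A)
    (hy₂m : y₂ - 1 ∈ IsLocalRing.maximalIdeal A)
    (u₁ u₂ σ₁ σ₂ g : PowerSeries A)
    (hu₁ : u₁ ^ 2 = X ^ 2 + C y₁)
    (hu₂ : u₂ ^ 2 = X ^ 2 + C y₂)
    (hu₁0 : constantCoeff u₁ - 1 ∈ IsLocalRing.maximalIdeal A)
    (hu₂0 : constantCoeff u₂ - 1 ∈ IsLocalRing.maximalIdeal A)
    (hσ₁ : σ₁ * u₁ = X)
    (hσ₂ : σ₂ * u₂ = X)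
    (hg0 : coeff 0 g ∈ IsLocalRing.maximalIdeal A)
    (hg1 : coeff 1 g - 1 ∈ IsLocalRing.maximalIdeal A)
    (hgn : ∀ n, 2 ≤ n → coeff n g ∈ IsLocalRing.maximalIdeal A)
    (hconj : pscomp σ₁ g = pscomp g σ₂) :
    (coeff 0 g) ^ 2 = 0 := by
  classical
  set mI := IsLocalRing.maximalIdeal A with hmI
  -- units from residues
  have hone : (1 : A) ∉ mI := by
    intro h1
    exact (IsLocalRing.maximalIdeal.isMaximal A).ne_top
      (Ideal.eq_top_of_isUnit_mem _ h1 isUnit_one)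
  have hunit_of : ∀ x : A, x - 1 ∈ mI → IsUnit x := by
    intro x hx
    by_contra hxu
    apply hone
    have hxm : x ∈ mI := (IsLocalRing.mem_maximalIdeal x).mpr hxu
    have he : (1 : A) = x - (x - 1) := by ring
    rw [he]
    exact Ideal.sub_mem _ hxm hx
  have h3nm : (3 : A) ∉ mI := by
    intro h3
    have h2m : (2 : A) ∈ mI := by
      have h52 : (2 : A) = 5 - 3 := by norm_num
      rw [h52]; exact Ideal.sub_mem _ h5 h3
    apply hone
    have h1e : (1 : A) = 3 - 2 := by norm_num
    rw [h1e]; exact Ideal.sub_mem _ h3 h2m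
  have h2u : IsUnit (2 : A) := by
    by_contra h2un
    apply h3nm
    have h2m : (2 : A) ∈ mI := (IsLocalRing.mem_maximalIdeal _).mpr h2un
    have h3e : (3 : A) = 5 - 2 := by norm_num
    rw [h3e]; exact Ideal.sub_mem _ h5 h2m
  have ha1u : IsUnit (coeff 1 g) := hunit_of _ hg1
  have hru : IsUnit (constantCoeff u₂) := hunit_of _ hu₂0
  -- nilpotency of the constant coefficient of g
  obtain ⟨Mn, hMn⟩ := IsArtinianRing.isNilpotent_jacobson_bot (R := A)
  have hmax : mI ^ Mn = ⊥ := by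
    rw [hmI, ← IsLocalRing.jacobson_eq_maximalIdeal (⊥ : Ideal A) bot_ne_top]
    exact hMn
  have hMg : (constantCoeff g) ^ Mn = 0 := by
    have h0 : constantCoeff g ∈ mI := by rwa [← coeff_zero_eq_constantCoeff_apply]
    have hp := Ideal.pow_mem_pow h0 Mn
    rw [hmax] at hp
    exact Ideal.mem_bot.mp hp
  -- facts about σ₂ and u₂
  have hp0 : constantCoeff σ₂ = 0 := by
    have h := congrArg (constantCoeff) hσ₂
    rw [map_mul, constantCoeff_X] at h
    exact (hru.mul_left_eq_zero).mp h
  have hσnil : (constantCoeff σ₂) ^ 1 = 0 := by rw [hp0, pow_one]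
  have hq1 : coeff 1 u₂ = 0 := by
    have h := congrArg (coeff 1) hu₂
    rw [pow_two, coeff_one_mul', map_add, coeff_X_pow, coeff_C,
      coeff_zero_eq_constantCoeff_apply] at h
    norm_num at h
    have h2 : (2 : A) * (constantCoeff u₂ * coeff 1 u₂) = 0 := by linear_combination h
    have h3 := (h2u.mul_right_eq_zero).mp h2
    exact (hru.mul_right_eq_zero).mp h3
  have eC : coeff 1 σ₂ * constantCoeff u₂ = 1 := by
    have h := congrArg (coeff 1) hσ₂
    rw [coeff_one_mul', coeff_zero_eq_constantCoeff_apply, coeff_zero_eq_constantCoeff_apply,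
      hp0, coeff_X, zero_mul] at h
    norm_num at h
    exact h
  have hp2 : coeff 2 σ₂ = 0 := by
    have h := congrArg (coeff 2) hσ₂
    rw [coeff_two_mul', coeff_zero_eq_constantCoeff_apply, coeff_zero_eq_constantCoeff_apply,
      hp0, coeff_X, hq1, zero_mul, mul_zero] at h
    norm_num at h
    exact (hru.mul_left_eq_zero).mp h
  -- the series w and the key multiplicative identities
  set w := pscomp u₁ g with hwdef
  have hww : w * w = pscomp (X ^ 2 + C y₁) g := by
    rw [hwdef, ← pscomp_mul hMg, ← pow_two, hu₁]
  set K := pscomp g σ₂ with hKdef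
  have hKw : K * w = g := by
    have h1 : pscomp σ₁ g * w = g := by
      rw [hwdef, ← pscomp_mul hMg, hσ₁, pscomp_X]
    rw [← hconj]
    exact h1
  -- coefficients of K
  have hK0 : coeff 0 K = coeff 0 g := by
    rw [hKdef, coeff_pscomp_eq_sum hσnil g 0 1 (by omega), Finset.sum_range_one, pow_zero]
    simp
  have hK1 : coeff 1 K = coeff 1 g * coeff 1 σ₂ := by
    rw [hKdef, coeff_pscomp_eq_sum hσnil g 1 2 (by omega), Finset.sum_range_succ,
      Finset.sum_range_one, pow_zero, pow_one]
    simp [PowerSeries.coeff_one]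
  have hK2 : coeff 2 K = coeff 2 g * (coeff 1 σ₂ * coeff 1 σ₂) := by
    rw [hKdef, coeff_pscomp_eq_sum hσnil g 2 3 (by omega), Finset.sum_range_succ,
      Finset.sum_range_succ, Finset.sum_range_one, pow_zero, pow_one, pow_two,
      coeff_two_mul']
    simp [PowerSeries.coeff_one, coeff_zero_eq_constantCoeff_apply, hp0, hp2]
  -- coefficients of the equation K * w = g
  have eA1 : coeff 0 g * coeff 0 w = coeff 0 g := by
    have h := congrArg (coeff 0) hKw
    rw [coeff_zero_mul', hK0] at h
    exact h
  have eA2 : coeff 0 g * coeff 1 w + coeff 1 g * (coeff 1 σ₂ * coeff 0 w)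
      = coeff 1 g := by
    have h := congrArg (coeff 1) hKw
    rw [coeff_one_mul', hK0, hK1] at h
    linear_combination h
  have eA3 : coeff 0 g * coeff 2 w + coeff 1 g * coeff 1 σ₂ * coeff 1 w
      + coeff 2 g * (coeff 1 σ₂ * coeff 1 σ₂) * coeff 0 w = coeff 2 g := by
    have h := congrArg (coeff 2) hKw
    rw [coeff_two_mul', hK0, hK1, hK2] at h
    linear_combination h
  -- coefficients of the equation w * w = g * g + y₁
  have hXC : ∀ n, coeff n (pscomp (X ^ 2 + C y₁) g)
      = y₁ * coeff n (1 : PowerSeries A) + coeff n (g * g) := by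
    intro n
    rw [pscomp, coeff_mk]
    have hsupp : (Function.support fun k => coeff k (X ^ 2 + C y₁) * coeff n (g ^ k))
        ⊆ ↑({0, 2} : Finset ℕ) := by
      intro k hk
      simp only [Function.mem_support] at hk
      simp only [Finset.coe_insert, Finset.coe_singleton, Set.mem_insert_iff,
        Set.mem_singleton_iff]
      by_contra hne
      push_neg at hne
      apply hk
      rw [map_add, coeff_X_pow, coeff_C, if_neg hne.2, if_neg hne.1, add_zero, zero_mul]
    rw [finsum_eq_sum_of_support_subset _ hsupp, Finset.sum_pair (by norm_num : (0 : ℕ) ≠ 2)]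
    rw [map_add, map_add, coeff_X_pow, coeff_X_pow, coeff_C, coeff_C, pow_zero, pow_two]
    norm_num
  have eB0 : coeff 0 w * coeff 0 w = y₁ + coeff 0 g * coeff 0 g := by
    have h := congrArg (coeff 0) hww
    rw [coeff_zero_mul', hXC 0, coeff_zero_mul'] at h
    simpa using h
  have eB1 : coeff 0 w * coeff 1 w = coeff 0 g * coeff 1 g := by
    have h := congrArg (coeff 1) hww
    have hco : coeff 1 (1 : PowerSeries A) = 0 := by simp [PowerSeries.coeff_one]
    rw [coeff_one_mul', hXC 1, coeff_one_mul', hco] at h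
    have h2 : (2 : A) * (coeff 0 w * coeff 1 w - coeff 0 g * coeff 1 g) = 0 := by
      linear_combination h
    have h3 := (h2u.mul_right_eq_zero).mp h2
    linear_combination h3
  have eB2 : coeff 0 w * coeff 2 w + coeff 1 w * coeff 1 w + coeff 2 w * coeff 0 w
      = coeff 0 g * coeff 2 g + coeff 1 g * coeff 1 g + coeff 2 g * coeff 0 g := by
    have h := congrArg (coeff 2) hww
    have hco : coeff 2 (1 : PowerSeries A) = 0 := by simp [PowerSeries.coeff_one]
    rw [coeff_two_mul', hXC 2, coeff_two_mul', hco] at h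
    linear_combination h
  clear hww hKw hconj hK0 hK1 hK2 hXC hq1 hp2 hMg hσnil hp0 hmax hMn
  -- abbreviate
  set a0 := coeff 0 g with ha0
  set a1 := coeff 1 g with ha1
  set a2 := coeff 2 g with ha2
  set w0 := coeff 0 w with hw0
  set w1 := coeff 1 w with hw1
  set w2 := coeff 2 w with hw2
  set p1 := coeff 1 σ₂ with hp1
  set r := constantCoeff u₂ with hr
  -- the algebraic certificate
  have h1 : a1 * (a0 ^ 2 * r + w0 ^ 2 - r * w0) = 0 := by
    linear_combination (w0 * r) * eA2 - (a0 * r) * eB1 - (a1 * w0 ^ 2) * eC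
  have h1' : a0 ^ 2 * r + w0 ^ 2 - r * w0 = 0 := (ha1u.mul_right_eq_zero).mp h1
  have h2 : r * w0 = a0 ^ 2 + y₁ + r * a0 ^ 2 := by linear_combination eB0 - h1'
  have h3 : a0 * y₁ = r * a0 - a0 ^ 3 * (1 + r) := by linear_combination r * eA1 - a0 * h2
  have h4 : (a0 ^ 2 + y₁ + r * a0 ^ 2) ^ 2 = r ^ 2 * (a0 ^ 2 + y₁) := by
    linear_combination (-(r * w0 + (a0 ^ 2 + y₁ + r * a0 ^ 2))) * h2 + r ^ 2 * eB0
  have h5 : a0 * r ^ 3 = a0 * r ^ 2 + a0 ^ 3 * r ^ 3 := by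
    linear_combination (-a0) * h4 + (a0 ^ 2 + a0 ^ 2 * r + r - r ^ 2 + y₁) * h3
  have h7 : a0 ^ 2 * ((2:A) * a1 ^ 2 * r ^ 5 + a1 ^ 2 * r ^ 6 - (2:A) * a0 * a2 * r ^ 5
      - a0 ^ 2 * a1 ^ 2 * r ^ 6) = 0 := by
    linear_combination ((2:A) * a0 * r ^ 6 * w0 ^ 3) * eA3 - (a0 ^ 2 * r ^ 6 * w0 ^ 2) * eB2
      - ((2:A) * a0 * a1 * p1 * r ^ 6 * w0 ^ 2) * eB1
      + (a0 ^ 2 * r ^ 6 * (w0 * w1 + a0 * a1)) * eB1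
      - (a0 * ((2:A)*a0*a1^2*r^5*w0^2 + (2:A)*a2*p1*r^5*w0^4 + (2:A)*a2*r^4*w0^4)) * eC - (a0 * ((2:A)*a0*a1^2*r^3*y₁ + (2:A)*a0*a1^2*r^4*w0 + a0*a1^2*r^4*y₁ + a0*a1^2*r^5*w0 + (4:A)*a0^2*a2*r*w0*y₁ + (6:A)*a0^2*a2*r*y₁^2 + (4:A)*a0^2*a2*r^2*w0*y₁ + (2:A)*a0^2*a2*r^2*w0^2 + (2:A)*a0^2*a2*r^3*w0^2 + (-4:A)*a0^2*a2*r^3*y₁ + (-2:A)*a0^2*a2*r^4*w0 + (-2:A)*a0^2*a2*r^4*y₁ + (6:A)*a0^2*a2*y₁^2 + (2:A)*a0^3*a1^2*r^3 + (3:A)*a0^3*a1^2*r^4 + a0^3*a1^2*r^5 + (2:A)*a0^4*a2*r*w0 + (12:A)*a0^4*a2*r*y₁ + (4:A)*a0^4*a2*r^2*w0 + (6:A)*a0^4*a2*r^2*y₁ + (-2:A)*a0^4*a2*r^3 + (2:A)*a0^4*a2*r^3*w0 + (-2:A)*a0^4*a2*r^4 + (6:A)*a0^4*a2*y₁ + (2:A)*a0^6*a2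 + (6:A)*a0^6*a2*r + (6:A)*a0^6*a2*r^2 + (2:A)*a0^6*a2*r^3 + (2:A)*a2*r*w0*y₁^2 + (2:A)*a2*r^2*w0^2*y₁ + (2:A)*a2*r^3*w0^3 + (-2:A)*a2*r^3*y₁^2 + (-2:A)*a2*r^4*w0*y₁ + (-2:A)*a2*r^5*w0^2 + (2:A)*a2*y₁^3)) * h2 - ((2:A)*a0*a1^2*r^3*y₁ + (2:A)*a0*a1^2*r^4 + a0*a1^2*r^4*y₁ + a0*a1^2*r^5 + (4:A)*a0^2*a2*r*y₁ + (6:A)*a0^2*a2*r*y₁^2 + (2:A)*a0^2*a2*r^2 + (4:A)*a0^2*a2*r^2*y₁ + (2:A)*a0^2*a2*r^3 + (-4:A)*a0^2*a2*r^3*y₁ + (-2:A)*a0^2*a2*r^4 + (-2:A)*a0^2*a2*r^4*y₁ + (6:A)*a0^2*a2*y₁^2 + (2:A)*a0^3*a1^2*r^3 + (3:A)*a0^3*a1^2*r^4 + a0^3*a1^2*r^5 + (2:A)*a0^4*a2*r + (12:A)*a0^4*a2*r*y₁ + (4:A)*a0^4*a2*r^2 + (6:A)*a0^4*a2*r^2*y₁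 + (-2:A)*a0^4*a2*r^4 + (6:A)*a0^4*a2*y₁ + (2:A)*a0^6*a2 + (6:A)*a0^6*a2*r + (6:A)*a0^6*a2*r^2 + (2:A)*a0^6*a2*r^3 + (2:A)*a2*r*y₁^2 + (2:A)*a2*r^2*y₁ + (2:A)*a2*r^3 + (-2:A)*a2*r^3*y₁^2 + (-2:A)*a2*r^4*y₁ + (-2:A)*a2*r^5 + (2:A)*a2*y₁^3) * h3 - ((-2:A)*a2*r^2 + (-2:A)*a2*r^3) * h5
  -- the cofactor is a unit
  have hTu : IsUnit ((2:A) * a1 ^ 2 * r ^ 5 + a1 ^ 2 * r ^ 6 - (2:A) * a0 * a2 * r ^ 5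
      - a0 ^ 2 * a1 ^ 2 * r ^ 6) := by
    by_contra hTun
    have hTm : ((2:A) * a1 ^ 2 * r ^ 5 + a1 ^ 2 * r ^ 6 - (2:A) * a0 * a2 * r ^ 5
        - a0 ^ 2 * a1 ^ 2 * r ^ 6) ∈ mI := (IsLocalRing.mem_maximalIdeal _).mpr hTun
    apply h3nm
    have hdec : (3 : A) = ((2:A) * a1 ^ 2 * r ^ 5 + a1 ^ 2 * r ^ 6 - (2:A) * a0 * a2 * r ^ 5
        - a0 ^ 2 * a1 ^ 2 * r ^ 6)
        - (a0 * (-(2:A) * a2 * r ^ 5 - a0 * a1 ^ 2 * r ^ 6)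
          + (a1 - 1) * ((a1 + 1) * r ^ 5 * ((2:A) + r))
          + (r - 1) * (r ^ 5 + (3:A) * r ^ 4 + (3:A) * r ^ 3 + (3:A) * r ^ 2 + (3:A) * r
            + (3:A))) := by
      ring
    rw [hdec]
    exact Ideal.sub_mem _ hTm (Ideal.add_mem _ (Ideal.add_mem _
      (Ideal.mul_mem_right _ _ hg0) (Ideal.mul_mem_right _ _ hg1))
      (Ideal.mul_mem_right _ _ hu₂0))
  have h8 : ((2:A) * a1 ^ 2 * r ^ 5 + a1 ^ 2 * r ^ 6 - (2:A) * a0 * a2 * r ^ 5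
      - a0 ^ 2 * a1 ^ 2 * r ^ 6) * a0 ^ 2 = 0 := by linear_combination h7
  exact (hTu.mul_right_eq_zero).mp h8
end

section
/- Let k be a field of characteristic 5 and let u ∈ k⟦t⟧ be the unique power series with u² = t² + 1 and constant coefficient u(0) = 1. Set σ := t·u⁻¹ ∈ k⟦t⟧. Then: (a) the five-fold composite σ ∘ σ ∘ σ ∘ σ ∘ σ under substitution equals t, while σ ≠ t; hence σ generates a cyclic group of order exactly 5 of continuous k-algebra automorphisms of k⟦t⟧; and (b) the t-adic order of σ/t − 1 = u⁻¹ − 1 equals 2 (i.e., σ has Hasse conductor ord_t(σ(t)/t − 1) = 2). -/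
open PowerSeries

section Aux

variable {k : Type*} [Field k]

lemma coeff_pow_zero_of_lt {a : PowerSeries k} (ha : constantCoeff a = 0)
    {n j : ℕ} (h : n < j) : (coeff n) (a ^ j) = 0 :=
  X_pow_dvd_iff.mp (pow_dvd_pow_of_dvd (X_dvd_iff.mpr ha) j) n h

lemma coeff_pscomp {f a : PowerSeries k} (ha : constantCoeff a = 0) (n : ℕ) :
    coeff n (pscomp f a) = ∑ i ∈ Finset.range (n + 1), coeff i f * coeff n (a ^ i) := by
  rw [pscomp, coeff_mk]
  apply finsum_eq_sum_of_support_subset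
  intro i hi
  simp only [Function.mem_support] at hi
  simp only [Finset.coe_range, Set.mem_Iio]
  by_contra hcon
  exact hi (by rw [coeff_pow_zero_of_lt ha (by omega), mul_zero])

lemma coeff_aeval {a : PowerSeries k} (ha : constantCoeff a = 0) (P : Polynomial k) (n : ℕ) :
    coeff n (Polynomial.aeval a P) = ∑ i ∈ Finset.range (n + 1), P.coeff i * coeff n (a ^ i) := by
  rw [Polynomial.aeval_eq_sum_range' (n := max P.natDegree n + 1) (by omega) a, map_sum]
  rw [← Finset.sum_subset (Finset.range_subset_range.mpr (by omega : n + 1 ≤ max P.natDegree n + 1))]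
  · exact Finset.sum_congr rfl fun i _ => by rw [map_smul, smul_eq_mul]
  · intro i _ hi
    rw [map_smul, smul_eq_mul, coeff_pow_zero_of_lt ha (by simp at hi; omega), mul_zero]

lemma coeff_pscomp_eq_aeval_trunc {f a : PowerSeries k} (ha : constantCoeff a = 0)
    {m n : ℕ} (h : n ≤ m) :
    coeff n (pscomp f a) = coeff n (Polynomial.aeval a (trunc (m + 1) f)) := by
  rw [coeff_pscomp ha, coeff_aeval ha]
  refine Finset.sum_congr rfl fun i hi => ?_
  rw [coeff_trunc, if_pos (by simp at hi; omega)]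

lemma pscomp_mul_s13 {f g a : PowerSeries k} (ha : constantCoeff a = 0) :
    pscomp (f * g) a = pscomp f a * pscomp g a := by
  ext n
  rw [coeff_pscomp_eq_aeval_trunc ha le_rfl]
  have key : coeff n (Polynomial.aeval a (trunc (n + 1) (f * g)))
      = coeff n (Polynomial.aeval a (trunc (n + 1) f * trunc (n + 1) g)) := by
    rw [coeff_aeval ha, coeff_aeval ha]
    refine Finset.sum_congr rfl fun i hi => ?_
    congr 1
    rw [coeff_trunc, if_pos (by simp at hi; omega), PowerSeries.coeff_mul, Polynomial.coeff_mul]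
    refine Finset.sum_congr rfl fun p hp => ?_
    rw [Finset.HasAntidiagonal.mem_antidiagonal] at hp
    simp only [Finset.mem_range] at hi
    rw [coeff_trunc, coeff_trunc, if_pos (by omega), if_pos (by omega)]
  rw [key, map_mul, PowerSeries.coeff_mul, PowerSeries.coeff_mul]
  refine Finset.sum_congr rfl fun p hp => ?_
  rw [Finset.HasAntidiagonal.mem_antidiagonal] at hp
  rw [← coeff_pscomp_eq_aeval_trunc ha (by omega : p.1 ≤ n),
    ← coeff_pscomp_eq_aeval_trunc ha (by omega : p.2 ≤ n)]

lemma pscomp_add {f g a : PowerSeries k} (ha : constantCoeff a = 0) :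
    pscomp (f + g) a = pscomp f a + pscomp g a := by
  ext n
  rw [map_add, coeff_pscomp ha, coeff_pscomp ha, coeff_pscomp ha, ← Finset.sum_add_distrib]
  exact Finset.sum_congr rfl fun i _ => by rw [map_add, add_mul]

lemma pscomp_one {a : PowerSeries k} (ha : constantCoeff a = 0) :
    pscomp (1 : PowerSeries k) a = 1 := by
  ext n
  rw [coeff_pscomp ha]
  simp only [coeff_one, ite_mul, one_mul, zero_mul]
  rw [Finset.sum_ite_eq' (Finset.range (n + 1)) 0]
  simp

lemma pscomp_X_s13 {a : PowerSeries k} (ha : constantCoeff a = 0) :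
    pscomp (X : PowerSeries k) a = a := by
  ext n
  rw [coeff_pscomp ha]
  simp only [coeff_X, ite_mul, one_mul, zero_mul]
  rw [Finset.sum_ite_eq' (Finset.range (n + 1)) 1]
  rcases n with _ | n
  · simpa using ha.symm
  · simp

lemma pscomp_const0 {f a : PowerSeries k} (ha : constantCoeff a = 0)
    (hf : constantCoeff f = 0) : constantCoeff (pscomp f a) = 0 := by
  rw [← coeff_zero_eq_constantCoeff_apply, coeff_pscomp ha]
  simp [Finset.sum_range_one, coeff_zero_eq_constantCoeff_apply, hf]

lemma coeff_one_pscomp {f a : PowerSeries k} (ha : constantCoeff a = 0) :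
    coeff 1 (pscomp f a) = coeff 1 f * coeff 1 a := by
  rw [coeff_pscomp ha]
  rw [Finset.sum_range_succ, Finset.sum_range_one]
  simp [coeff_one]

lemma step_lemma {σ a : PowerSeries k} (hσ0 : constantCoeff σ = 0)
    (hσeq : σ ^ 2 * (X ^ 2 + 1) = X ^ 2) (ha0 : constantCoeff a = 0) {c : k}
    (hac : a ^ 2 * (C c * X ^ 2 + 1) = X ^ 2) :
    constantCoeff (pscomp σ a) = 0 ∧
      (pscomp σ a) ^ 2 * (C (c + 1) * X ^ 2 + 1) = X ^ 2 ∧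
      coeff 1 (pscomp σ a) = coeff 1 σ * coeff 1 a := by
  refine ⟨pscomp_const0 ha0 hσ0, ?_, coeff_one_pscomp ha0⟩
  have h1 : (pscomp σ a) ^ 2 * (a ^ 2 + 1) = a ^ 2 := by
    have e : pscomp (σ * σ * (X * X + 1)) a = pscomp (X * X) a := by
      rw [show σ * σ * (X * X + 1) = σ ^ 2 * (X ^ 2 + 1) by ring,
        show (X * X : PowerSeries k) = X ^ 2 by ring, hσeq]
    simp only [pscomp_mul_s13 ha0, pscomp_add ha0, pscomp_X_s13 ha0, pscomp_one ha0] at e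
    linear_combination e
  rw [map_add, map_one]
  linear_combination (C c * X ^ 2 + 1) * h1 + hac - (pscomp σ a) ^ 2 * hac

end Aux

theorem order_five_conductor_two {k : Type*} [Field k] [CharP k 5]
    (u σ : PowerSeries k) (hu : u ^ 2 = X ^ 2 + 1)
    (hu0 : constantCoeff u = 1) (hσ : σ * u = X) :
    (pscomp σ (pscomp σ (pscomp σ (pscomp σ σ))) = X ∧ σ ≠ X) ∧
      (u⁻¹ - 1).order = 2 := by
  have two_ne : (2 : k) ≠ 0 := by
    intro h
    have : (5 : ℕ) ∣ 2 := (CharP.cast_eq_zero_iff k 5 2).mp (by exact_mod_cast h)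
    norm_num at this
  have hσ0 : constantCoeff σ = 0 := by
    have h := congrArg (constantCoeff) hσ
    rw [map_mul, hu0, mul_one, constantCoeff_X] at h
    exact h
  have hσ1 : coeff 1 σ = 1 := by
    have h := congrArg (coeff 1) hσ
    rw [PowerSeries.coeff_mul, Finset.Nat.sum_antidiagonal_eq_sum_range_succ_mk] at h
    rw [Finset.sum_range_succ, Finset.sum_range_one] at h
    simpa [hσ0, hu0] using h
  have hσeq : σ ^ 2 * (X ^ 2 + 1) = X ^ 2 := by
    linear_combination (σ * u + X) * hσ - σ ^ 2 * hu
  have base : σ ^ 2 * (C 1 * X ^ 2 + 1) = X ^ 2 := by rw [map_one, one_mul]; exact hσeq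
  obtain ⟨h20, h2eq, h21⟩ := step_lemma hσ0 hσeq hσ0 base
  obtain ⟨h30, h3eq, h31⟩ := step_lemma hσ0 hσeq h20 h2eq
  obtain ⟨h40, h4eq, h41⟩ := step_lemma hσ0 hσeq h30 h3eq
  obtain ⟨h50, h5eq, h51⟩ := step_lemma hσ0 hσeq h40 h4eq
  set a5 := pscomp σ (pscomp σ (pscomp σ (pscomp σ σ))) with ha5
  have hC5 : (1 : k) + 1 + 1 + 1 + 1 = 0 := by
    have h5 : ((5 : ℕ) : k) = 0 := CharP.cast_eq_zero k 5
    push_cast at h5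
    linear_combination h5
  rw [hC5, map_zero, zero_mul, zero_add, mul_one] at h5eq
  have c1 : coeff 1 a5 = 1 := by
    rw [h51, h41, h31, h21, hσ1]; ring
  refine ⟨⟨?_, ?_⟩, ?_⟩
  · -- a5 = X
    have hfac : (a5 - X) * (a5 + X) = 0 := by linear_combination h5eq
    rcases mul_eq_zero.mp hfac with h | h
    · linear_combination h
    · exfalso
      have := congrArg (coeff 1) h
      rw [map_add, c1, coeff_one_X, map_zero] at this
      exact two_ne (by linear_combination this)
  · -- σ ≠ X
    intro hX
    subst hX
    have hX0 : (X : PowerSeries k) ≠ 0 := X_ne_zero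
    have hu1 : u = 1 := mul_left_cancel₀ hX0 (by linear_combination hσ)
    rw [hu1] at hu
    have hX2 : (X : PowerSeries k) ^ 2 = 0 := by linear_combination -hu
    exact hX0 ((pow_eq_zero_iff (by norm_num : (2:ℕ) ≠ 0)).mp hX2)
  · -- order part
    have hu0' : constantCoeff u ≠ 0 := by rw [hu0]; exact one_ne_zero
    have huinv : u * u⁻¹ = 1 := PowerSeries.mul_inv_cancel u hu0'
    have hfact : u⁻¹ - 1 = (u - 1) * (-u⁻¹) := by linear_combination huinv
    have hmul : (u - 1) * (u + 1) = X ^ 2 := by linear_combination hu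
    have h2 : (u + 1).order = 0 := by
      rw [show ((0 : ℕ∞)) = ((0 : ℕ) : ℕ∞) by rfl, order_eq_nat]
      constructor
      · have hc : (coeff 0) (u + 1) = 1 + 1 := by simp [hu0]
        rw [hc]
        exact fun h => two_ne (by linear_combination h)
      · intro i hi; omega
    have h1 : (u - 1).order = 2 := by
      have := order_mul (u - 1) (u + 1)
      rw [hmul, h2, add_zero, order_X_pow] at this
      rw [← this]; norm_num
    have hinv0 : (-u⁻¹ : PowerSeries k).order = 0 := by
      rw [show ((0 : ℕ∞)) = ((0 : ℕ) : ℕ∞) by rfl, order_eq_nat]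
      constructor
      · simp [PowerSeries.constantCoeff_inv, hu0]
      · intro i hi; omega
    rw [hfact, order_mul, h1, hinv0, add_zero]
end
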